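/- Let a ∈ (0, 1), let Y be a finite nonempty type, let p, q : Y → ℝ≥0 be label distributions, and let (μ_y)_{y∈Y} be a common family of probability measures on a measurable space Z (conditional invariance). Let P_Y, Q_Y be the probability measures on Y with mass functions p and q, and let P_Z = Σ_y p(y) • μ_y, Q_Z = Σ_y q(y) • μ_y be the induced mixtures on Z. Then the generalized Jensen–Shannon divergences satisfy d_{JS,a}(P_Z, Q_Z) ≤ d_{JS,a}(P_Y, Q_Y), where d_{JS,a}(P, Q) = (1 − a)·KL(P ‖ (1−a)·P + a·Q) + a·KL(Q ‖ (1−a)·P + a·Q). Equivalently, when the representation is conditional invariant, the mutual information between the representation and the domain index is bounded by that between the label and the domain index: I^w(Z; D) ≤ I^w(Y; D). -/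

import Mathlib

open MeasureTheory
open scoped Classical
open scoped ENNReal

/-- Kullback–Leibler divergence between two measures, with value `⊤` unless `μ ≪ ν` and the
log-likelihood ratio is integrable. -/
noncomputable def klDiv {W : Type*} [MeasurableSpace W] (μ ν : Measure W) : EReal :=
  if μ ≪ ν ∧ Integrable (llr μ ν) μ then ((∫ x, llr μ ν x ∂μ : ℝ) : EReal) else ⊤

/-- Generalized Jensen–Shannon divergence with mixing weight `a`:
`d_{JS,a}(P, Q) = (1-a)·KL(P ‖ M) + a·KL(Q ‖ M)` where `M = (1-a)·P + a·Q`. -/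
noncomputable def genJS {W : Type*} [MeasurableSpace W] (a : ℝ) (μ ν : Measure W) : EReal :=
  ((1 - a : ℝ) : EReal) * klDiv μ (ENNReal.ofReal (1 - a) • μ + ENNReal.ofReal a • ν) +
    ((a : ℝ) : EReal) * klDiv ν (ENNReal.ofReal (1 - a) • μ + ENNReal.ofReal a • ν)

open Real in
lemma abs_mul_log_le {x C : ℝ} (hx : 0 ≤ x) (hxC : x ≤ C) :
    |x * Real.log x| ≤ C ^ 2 + C + 1 := by
  have hC : 0 ≤ C := le_trans hx hxC
  rcases eq_or_lt_of_le hx with h | h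
  · rw [← h]; simp; positivity
  · have h1 : Real.log x ≤ x - 1 := Real.log_le_sub_one_of_pos h
    have h2 : Real.log x⁻¹ ≤ x⁻¹ - 1 := Real.log_le_sub_one_of_pos (by positivity)
    rw [Real.log_inv] at h2
    have h3 : (1 : ℝ) - x⁻¹ ≤ Real.log x := by linarith
    have h4 := mul_le_mul_of_nonneg_left h3 hx
    have h5 := mul_le_mul_of_nonneg_left h1 hx
    have h6 : x * x⁻¹ = 1 := mul_inv_cancel₀ h.ne'
    rw [abs_le]
    constructor <;> nlinarith

open Real in
lemma sum_mul_log_le {Y : Type*} [Fintype Y] (t s L : Y → ℝ)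
    (ht : ∀ y, 0 ≤ t y) (hs : ∀ y, 0 ≤ s y) (hsum : ∑ y, s y = 1)
    (hts : ∀ y, s y = 0 → t y = 0)
    (hL : ∀ y, t y ≠ 0 → t y / s y = L y) :
    (∑ y, t y) * Real.log (∑ y, t y) ≤ ∑ y, t y * Real.log (L y) := by
  have key := Real.convexOn_mul_log.map_sum_le (t := Finset.univ) (w := s)
    (p := fun y => t y / s y) (fun y _ => hs y) hsum
    (fun y _ => Set.mem_Ici.mpr (div_nonneg (ht y) (hs y)))
  have h1 : ∑ y, s y • (t y / s y) = ∑ y, t y := by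
    refine Finset.sum_congr rfl fun y _ => ?_
    rcases eq_or_ne (s y) 0 with h | h
    · simp [h, hts y h]
    · simp [smul_eq_mul, mul_div_cancel₀ _ h]
  have h2 : ∀ y, s y • ((t y / s y) * Real.log (t y / s y)) = t y * Real.log (L y) := by
    intro y
    rcases eq_or_ne (t y) 0 with h | h
    · rcases eq_or_ne (s y) 0 with h' | h' <;> simp [h, h']
    · have h' : s y ≠ 0 := fun h' => h (hts y h')
      rw [smul_eq_mul, ← mul_assoc, mul_div_cancel₀ _ h', hL y h]
  rw [h1] at key
  calc (∑ y, t y) * Real.log (∑ y, t y) ≤ ∑ y, s y • ((t y / s y) * Real.log (t y / s y)) := key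
    _ = ∑ y, t y * Real.log (L y) := Finset.sum_congr rfl fun y _ => h2 y

open Real ENNReal in
lemma klDiv_mixture_le {Y : Type*} [Fintype Y] {Z : Type*} [MeasurableSpace Z]
    (w m : Y → ℝ≥0∞) (hm_top : ∀ y, m y ≠ ∞)
    (c : ℝ≥0∞) (hc : c ≠ ∞) (hwm : ∀ y, w y ≤ c * m y)
    (μ : Y → Measure Z) (hμ : ∀ y, IsProbabilityMeasure (μ y)) :
    ∃ r : ℝ, klDiv (∑ y, w y • μ y) (∑ y, m y • μ y) = (r : EReal) ∧
      r ≤ ∑ y, (w y).toReal * Real.log ((w y).toReal / (m y).toReal) := by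
  have hw_top : ∀ y, w y ≠ ∞ := fun y =>
    ne_top_of_le_ne_top (ENNReal.mul_ne_top hc (hm_top y)) (hwm y)
  have hw0 : ∀ y, m y = 0 → w y = 0 := fun y hy => by
    have := hwm y; rw [hy, mul_zero] at this; exact le_antisymm this zero_le
  set P : Measure Z := ∑ y, w y • μ y with hPdef
  set M : Measure Z := ∑ y, m y • μ y with hMdef
  have happly : ∀ (v : Y → ℝ≥0∞) (s : Set Z),
      (∑ y, v y • μ y) s = ∑ y, v y * μ y s := by
    intro v s
    rw [Measure.finset_sum_apply]
    simp [Measure.smul_apply, smul_eq_mul]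
  haveI hMfin : IsFiniteMeasure M := by
    constructor
    rw [hMdef, happly]
    exact ENNReal.sum_lt_top.mpr fun y _ => by
      simpa [measure_univ] using (hm_top y).lt_top
  haveI hPfin : IsFiniteMeasure P := by
    constructor
    rw [hPdef, happly]
    exact ENNReal.sum_lt_top.mpr fun y _ => by
      simpa [measure_univ] using (hw_top y).lt_top
  -- absolute continuity
  have hPleM : P ≤ c • M := by
    refine Measure.le_intro fun s hs _ => ?_
    rw [hPdef, happly, Measure.smul_apply, hMdef, happly, smul_eq_mul, Finset.mul_sum]
    refine Finset.sum_le_sum fun y _ => ?_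
    calc w y * μ y s ≤ c * m y * μ y s := by gcongr; exact hwm y
      _ = c * (m y * μ y s) := by ring
  have hPM : P ≪ M := Measure.absolutelyContinuous_of_le_smul hPleM
  have hac : ∀ y, m y ≠ 0 → μ y ≪ M := by
    intro y hy
    refine Measure.absolutelyContinuous_of_le_smul (c := (m y)⁻¹) ?_
    refine Measure.le_intro fun s hs _ => ?_
    rw [Measure.smul_apply, smul_eq_mul, hMdef, happly]
    calc μ y s = (m y)⁻¹ * (m y * μ y s) := by
          rw [← mul_assoc, ENNReal.inv_mul_cancel hy (hm_top y), one_mul]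
      _ ≤ (m y)⁻¹ * ∑ y', m y' * μ y' s := by
          gcongr
          exact (Finset.single_le_sum
            (f := fun y' => m y' * μ y' s) (fun y' _ => zero_le) (Finset.mem_univ y))
  set f : Y → Z → ℝ≥0∞ := fun y => (μ y).rnDeriv M with hfdef
  have hfmeas : ∀ y, Measurable (f y) := fun y => Measure.measurable_rnDeriv _ _
  -- withDensity representations
  have hwd : ∀ (v : Y → ℝ≥0∞), (∀ y, m y = 0 → v y = 0) →
      (∑ y, v y • μ y) = M.withDensity (fun x => ∑ y, v y * f y x) := by
    intro v hv
    ext s hs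
    rw [withDensity_apply _ hs, happly]
    rw [lintegral_finset_sum' _ (fun y _ => ((hfmeas y).const_mul _).aemeasurable)]
    refine Finset.sum_congr rfl fun y _ => ?_
    rw [lintegral_const_mul _ (hfmeas y)]
    rcases eq_or_ne (m y) 0 with hy | hy
    · simp [hv y hy]
    · rw [Measure.setLIntegral_rnDeriv (hac y hy)]
  set G : Z → ℝ≥0∞ := fun x => ∑ y, w y * f y x with hGdef
  have hGmeas : Measurable G := by
    apply Finset.measurable_sum
    exact fun y _ => (hfmeas y).const_mul _
  have hDmeas : Measurable (fun x => ∑ y, m y * f y x) := by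
    apply Finset.measurable_sum
    exact fun y _ => (hfmeas y).const_mul _
  have hPG : P = M.withDensity G := hwd w hw0
  have hMD : M = M.withDensity (fun x => ∑ y, m y * f y x) := hwd m (fun _ h => h)
  have hGrn : P.rnDeriv M =ᵐ[M] G := by
    rw [hPG]; exact Measure.rnDeriv_withDensity M hGmeas
  have hD1 : (fun x => ∑ y, m y * f y x) =ᵐ[M] (fun _ => 1) := by
    have h1 : (M.withDensity (fun x => ∑ y, m y * f y x)).rnDeriv M
        =ᵐ[M] (fun x => ∑ y, m y * f y x) := Measure.rnDeriv_withDensity M hDmeas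
    have h2 := Measure.rnDeriv_self M
    rw [← hMD] at h1
    exact h1.symm.trans h2
  have hf_lt : ∀ᵐ x ∂M, ∀ y, f y x < ∞ :=
    ae_all_iff.mpr fun y => Measure.rnDeriv_lt_top _ _
  -- key pointwise facts
  have key : ∀ᵐ x ∂M,
      (G x).toReal * Real.log (G x).toReal ≤
        (∑ y, (w y).toReal * (f y x).toReal * Real.log ((w y).toReal / (m y).toReal)) ∧
      (G x).toReal ≤ c.toReal := by
    filter_upwards [hD1, hf_lt] with x hDx hfx
    have hftop : ∀ y, f y x ≠ ∞ := fun y => (hfx y).ne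
    have hGle : G x ≤ c := by
      calc G x ≤ ∑ y, c * (m y * f y x) := by
            refine Finset.sum_le_sum fun y _ => ?_
            calc w y * f y x ≤ c * m y * f y x := by gcongr; exact hwm y
              _ = c * (m y * f y x) := by ring
        _ = c * ∑ y, m y * f y x := by rw [Finset.mul_sum]
        _ = c := by rw [hDx]; simp
    have hGtop : G x ≠ ∞ := ne_top_of_le_ne_top hc hGle
    have htop_t : ∀ y, w y * f y x ≠ ∞ := fun y => ENNReal.mul_ne_top (hw_top y) (hftop y)
    have htop_s : ∀ y, m y * f y x ≠ ∞ := fun y => ENNReal.mul_ne_top (hm_top y) (hftop y)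
    constructor
    · have hGt : (G x).toReal = ∑ y, (w y * f y x).toReal := by
        rw [hGdef]; exact ENNReal.toReal_sum fun y _ => htop_t y
      have hst : ∑ y, (m y * f y x).toReal = 1 := by
        rw [← ENNReal.toReal_sum fun y _ => htop_s y, hDx]; simp
      have := sum_mul_log_le (fun y => (w y * f y x).toReal)
        (fun y => (m y * f y x).toReal)
        (fun y => (w y).toReal / (m y).toReal)
        (fun y => ENNReal.toReal_nonneg) (fun y => ENNReal.toReal_nonneg) hst
        (fun y hy => by
          rw [ENNReal.toReal_eq_zero_iff] at hy ⊢
          rcases hy with hy | hy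
          · rcases mul_eq_zero.mp hy with hy | hy
            · exact Or.inl (by rw [hw0 y hy, zero_mul])
            · exact Or.inl (by rw [hy, mul_zero])
          · exact absurd hy (htop_s y))
        (fun y hy => by
          have hwy : w y ≠ 0 := by
            intro h; apply hy; rw [h, zero_mul]; simp
          have hfy : f y x ≠ 0 := by
            intro h; apply hy; rw [h, mul_zero]; simp
          have hmy : m y ≠ 0 := fun h => hwy (hw0 y h)
          rw [ENNReal.toReal_mul, ENNReal.toReal_mul, mul_div_mul_comm,
            div_self (ENNReal.toReal_ne_zero.mpr ⟨hfy, hftop y⟩), mul_one])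
      rw [hGt]
      refine this.trans (le_of_eq (Finset.sum_congr rfl fun y _ => ?_))
      rw [ENNReal.toReal_mul]
    · exact ENNReal.toReal_le_toReal hGtop hc |>.mpr hGle
  -- integrability
  have hmeas_phi : Measurable (fun x => (G x).toReal * Real.log (G x).toReal) :=
    (hGmeas.ennreal_toReal).mul (Real.measurable_log.comp hGmeas.ennreal_toReal)
  have hint_phi : Integrable (fun x => (G x).toReal * Real.log (G x).toReal) M := by
    refine ⟨hmeas_phi.aestronglyMeasurable, HasFiniteIntegral.of_bounded
      (C := c.toReal ^ 2 + c.toReal + 1) ?_⟩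
    filter_upwards [key] with x hx
    exact abs_mul_log_le ENNReal.toReal_nonneg hx.2
  have hint_rhs : Integrable (fun x =>
      ∑ y, (w y).toReal * (f y x).toReal * Real.log ((w y).toReal / (m y).toReal)) M := by
    refine integrable_finset_sum _ fun y _ => ?_
    haveI := hμ y
    exact ((Measure.integrable_toReal_rnDeriv (μ := μ y) (ν := M)).const_mul _).mul_const _
  have hsmul_eq : (fun x => (P.rnDeriv M x).toReal • llr P M x)
      =ᵐ[M] (fun x => (G x).toReal * Real.log (G x).toReal) := by
    filter_upwards [hGrn] with x hx
    rw [llr, hx, smul_eq_mul]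
  have hint_llr : Integrable (llr P M) P := by
    rw [← integrable_rnDeriv_smul_iff hPM]
    exact hint_phi.congr hsmul_eq.symm
  refine ⟨∫ x, llr P M x ∂P, by rw [klDiv, if_pos ⟨hPM, hint_llr⟩], ?_⟩
  have step1 : ∫ x, llr P M x ∂P = ∫ x, (G x).toReal * Real.log (G x).toReal ∂M := by
    rw [← integral_rnDeriv_smul hPM]
    exact integral_congr_ae hsmul_eq
  have step2 : ∫ x, (G x).toReal * Real.log (G x).toReal ∂M ≤
      ∫ x, ∑ y, (w y).toReal * (f y x).toReal * Real.log ((w y).toReal / (m y).toReal) ∂M :=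
    integral_mono_ae hint_phi hint_rhs (key.mono fun x hx => hx.1)
  have step3 : ∫ x, ∑ y, (w y).toReal * (f y x).toReal *
      Real.log ((w y).toReal / (m y).toReal) ∂M =
      ∑ y, (w y).toReal * Real.log ((w y).toReal / (m y).toReal) := by
    rw [integral_finset_sum _ fun y _ => ?_]
    · refine Finset.sum_congr rfl fun y _ => ?_
      rcases eq_or_ne (m y) 0 with hy | hy
      · simp [hw0 y hy]
      · haveI := hμ y
        have heq : ∀ x : Z, (w y).toReal * (f y x).toReal * Real.log ((w y).toReal / (m y).toReal)
            = ((w y).toReal * Real.log ((w y).toReal / (m y).toReal)) * (f y x).toReal := by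
          intro x; ring
        simp_rw [heq]
        rw [integral_const_mul, Measure.integral_toReal_rnDeriv (hac y hy)]
        simp [measure_univ]
    · haveI := hμ y
      exact ((Measure.integrable_toReal_rnDeriv (μ := μ y) (ν := M)).const_mul _).mul_const _
  rw [step1]
  exact step2.trans (le_of_eq step3)

open Real ENNReal in
lemma klDiv_discrete_eq {Y : Type*} [Fintype Y] [MeasurableSpace Y] [DiscreteMeasurableSpace Y]
    (w m : Y → ℝ≥0∞) (hw_top : ∀ y, w y ≠ ∞) (hm_top : ∀ y, m y ≠ ∞)
    (h0 : ∀ y, m y = 0 → w y = 0) :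
    klDiv (∑ y, w y • Measure.dirac y) (∑ y, m y • Measure.dirac y)
      = ((∑ y, (w y).toReal * Real.log ((w y).toReal / (m y).toReal) : ℝ) : EReal) := by
  set P : Measure Y := ∑ y, w y • Measure.dirac y with hPdef
  set M : Measure Y := ∑ y, m y • Measure.dirac y with hMdef
  set h : Y → ℝ≥0∞ := fun y => w y / m y with hhdef
  haveI hPfin : IsFiniteMeasure P := by
    constructor
    rw [hPdef, Measure.finset_sum_apply]
    refine ENNReal.sum_lt_top.mpr fun y _ => ?_
    simp only [Measure.smul_apply, smul_eq_mul, measure_univ, mul_one]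
    exact (hw_top y).lt_top
  haveI hMfin : IsFiniteMeasure M := by
    constructor
    rw [hMdef, Measure.finset_sum_apply]
    refine ENNReal.sum_lt_top.mpr fun y _ => ?_
    simp only [Measure.smul_apply, smul_eq_mul, measure_univ, mul_one]
    exact (hm_top y).lt_top
  have hPwd : P = M.withDensity h := by
    ext s hs
    rw [withDensity_apply _ hs, ← lintegral_indicator hs, hMdef,
      lintegral_finset_sum_measure]
    rw [hPdef, Measure.finset_sum_apply]
    refine Finset.sum_congr rfl fun y _ => ?_
    rw [lintegral_smul_measure, lintegral_dirac, Measure.smul_apply, smul_eq_mul,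
      Measure.dirac_apply' _ hs]
    by_cases hy : y ∈ s
    · simp only [Set.indicator_of_mem hy, Pi.one_apply, mul_one]
      rcases eq_or_ne (m y) 0 with h' | h'
      · simp [hhdef, h', h0 y h']
      · exact (ENNReal.mul_div_cancel' (fun h => absurd h h') (fun h => absurd h (hm_top y))).symm
    · simp [Set.indicator_of_notMem hy]
  have hPM : P ≪ M := by rw [hPwd]; exact withDensity_absolutelyContinuous _ _
  have hrn : P.rnDeriv M =ᵐ[M] h := by
    rw [hPwd]; exact Measure.rnDeriv_withDensity M (by fun_prop)
  have hrnP : P.rnDeriv M =ᵐ[P] h := hPM.ae_le hrn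
  have hll_eq : llr P M =ᵐ[P] fun y => Real.log (h y).toReal := by
    filter_upwards [hrnP] with y hy
    rw [llr, hy]
  have hint : Integrable (llr P M) P := .of_finite
  rw [klDiv, if_pos ⟨hPM, hint⟩]
  norm_cast
  rw [integral_congr_ae hll_eq, hPdef,
    integral_finset_sum_measure (fun y _ => by
      haveI : IsFiniteMeasure (w y • Measure.dirac y) :=
        ⟨by simp only [Measure.smul_apply, smul_eq_mul, measure_univ, mul_one]
            exact (hw_top y).lt_top⟩
      exact .of_finite)]
  refine Finset.sum_congr rfl fun y _ => ?_
  rw [integral_smul_measure, integral_dirac, smul_eq_mul]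
  rcases eq_or_ne (w y) 0 with h' | h'
  · simp [h']
  · congr 1
    rw [hhdef]
    simp only [ENNReal.toReal_div]

/-- **Lemma 1**: under a conditional invariant transformation (common class-conditional
distributions `μ y`), the generalized Jensen–Shannon divergence between the representation
marginals is bounded by that between the label distributions: `I^w(Z; D) ≤ I^w(Y; D)`. -/
theorem genJS_mixtures_le_genJS_labels
    {Y : Type*} [Fintype Y] [Nonempty Y] [MeasurableSpace Y] [DiscreteMeasurableSpace Y]
    {Z : Type*} [MeasurableSpace Z]
    (a : ℝ) (ha0 : 0 < a) (ha1 : a < 1)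
    (p q : Y → NNReal) (hp : ∑ y, p y = 1) (hq : ∑ y, q y = 1)
    (μ : Y → Measure Z) (hμ : ∀ y, IsProbabilityMeasure (μ y)) :
    genJS a (∑ y, (p y : ENNReal) • μ y) (∑ y, (q y : ENNReal) • μ y) ≤
      genJS a (∑ y, (p y : ENNReal) • Measure.dirac y) (∑ y, (q y : ENNReal) • Measure.dirac y) := by
  have ha1' : (0:ℝ) < 1 - a := by linarith
  have hc1_0 : ENNReal.ofReal (1 - a) ≠ 0 := (ENNReal.ofReal_pos.mpr ha1').ne'
  have hc2_0 : ENNReal.ofReal a ≠ 0 := (ENNReal.ofReal_pos.mpr ha0).ne'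
  have hc1_top : ENNReal.ofReal (1 - a) ≠ ∞ := ENNReal.ofReal_ne_top
  have hc2_top : ENNReal.ofReal a ≠ ∞ := ENNReal.ofReal_ne_top
  set m : Y → ENNReal := fun y =>
    ENNReal.ofReal (1 - a) * (p y : ENNReal) + ENNReal.ofReal a * (q y : ENNReal) with hmdef
  have hm_top : ∀ y, m y ≠ ∞ := fun y => ENNReal.add_ne_top.mpr
    ⟨ENNReal.mul_ne_top hc1_top ENNReal.coe_ne_top, ENNReal.mul_ne_top hc2_top ENNReal.coe_ne_top⟩
  have hm0p : ∀ y, m y = 0 → (p y : ENNReal) = 0 := by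
    intro y hy
    rw [hmdef] at hy
    rcases mul_eq_zero.mp (add_eq_zero.mp hy).1 with h | h
    · exact absurd h hc1_0
    · exact h
  have hm0q : ∀ y, m y = 0 → (q y : ENNReal) = 0 := by
    intro y hy
    rw [hmdef] at hy
    rcases mul_eq_zero.mp (add_eq_zero.mp hy).2 with h | h
    · exact absurd h hc2_0
    · exact h
  have hwmP : ∀ y, (p y : ENNReal) ≤ (ENNReal.ofReal (1 - a))⁻¹ * m y := by
    intro y
    calc (p y : ENNReal) = (ENNReal.ofReal (1 - a))⁻¹ * (ENNReal.ofReal (1 - a) * p y) := by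
          rw [← mul_assoc, ENNReal.inv_mul_cancel hc1_0 hc1_top, one_mul]
      _ ≤ (ENNReal.ofReal (1 - a))⁻¹ * m y := by gcongr; exact le_self_add
  have hwmQ : ∀ y, (q y : ENNReal) ≤ (ENNReal.ofReal a)⁻¹ * m y := by
    intro y
    calc (q y : ENNReal) = (ENNReal.ofReal a)⁻¹ * (ENNReal.ofReal a * q y) := by
          rw [← mul_assoc, ENNReal.inv_mul_cancel hc2_0 hc2_top, one_mul]
      _ ≤ (ENNReal.ofReal a)⁻¹ * m y := by gcongr; exact le_add_self
  have hmixZ : ENNReal.ofReal (1 - a) • (∑ y, (p y : ENNReal) • μ y)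
      + ENNReal.ofReal a • (∑ y, (q y : ENNReal) • μ y) = ∑ y, m y • μ y := by
    rw [Finset.smul_sum, Finset.smul_sum, ← Finset.sum_add_distrib]
    exact Finset.sum_congr rfl fun y _ => by rw [smul_smul, smul_smul, ← add_smul]
  have hmixY : ENNReal.ofReal (1 - a) • (∑ y, (p y : ENNReal) • Measure.dirac y)
      + ENNReal.ofReal a • (∑ y, (q y : ENNReal) • Measure.dirac y)
      = ∑ y, m y • Measure.dirac y := by
    rw [Finset.smul_sum, Finset.smul_sum, ← Finset.sum_add_distrib]
    exact Finset.sum_congr rfl fun y _ => by rw [smul_smul, smul_smul, ← add_smul]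
  obtain ⟨r1, hr1, hr1le⟩ := klDiv_mixture_le (fun y => (p y : ENNReal)) m hm_top
    (ENNReal.ofReal (1 - a))⁻¹ (by simp [hc1_0]) hwmP μ hμ
  obtain ⟨r2, hr2, hr2le⟩ := klDiv_mixture_le (fun y => (q y : ENNReal)) m hm_top
    (ENNReal.ofReal a)⁻¹ (by simp [hc2_0]) hwmQ μ hμ
  have hd1 := klDiv_discrete_eq (fun y => (p y : ENNReal)) m
    (fun y => ENNReal.coe_ne_top) hm_top hm0p
  have hd2 := klDiv_discrete_eq (fun y => (q y : ENNReal)) m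
    (fun y => ENNReal.coe_ne_top) hm_top hm0q
  rw [genJS, genJS, hmixZ, hmixY, hr1, hr2, hd1, hd2, ← EReal.coe_mul, ← EReal.coe_mul,
    ← EReal.coe_mul, ← EReal.coe_mul, ← EReal.coe_add, ← EReal.coe_add]
  exact EReal.coe_le_coe_iff.mpr (add_le_add
    (mul_le_mul_of_nonneg_left hr1le (by linarith))
    (mul_le_mul_of_nonneg_left hr2le ha0.le))
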